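/- Let A ∈ ℂ^{M×M} be Hermitian positive definite, H ∈ ℂ^{M×L} with columns h₁,…,h_L, and fix j. Then h_j* (A + H^{[j]} (H^{[j]})*)⁻¹ h_j = 1 / [(I_L + H* A⁻¹ H)⁻¹]_{jj} − 1, where H^{[j]} is H with column j removed. -/

import Mathlib

open Matrix ComplexOrder

/-- For `A` Hermitian positive definite, `H ∈ ℂ^{M×L}` with `j`-th column `h_j`,
and `H^{[j]}` the matrix `H` with column `j` removed,
`h_j* (A + H^{[j]} (H^{[j]})ᴴ)⁻¹ h_j = 1 / [(I_L + Hᴴ A⁻¹ H)⁻¹]_{jj} − 1`. -/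
theorem sinr_mse_identity {M L : ℕ} (A : Matrix (Fin M) (Fin M) ℂ)
    (hA : A.PosDef) (H : Matrix (Fin M) (Fin (L + 1)) ℂ) (j : Fin (L + 1)) :
    star (fun i => H i j) ⬝ᵥ
        (A + H.submatrix id j.succAbove * (H.submatrix id j.succAbove)ᴴ)⁻¹.mulVec
          (fun i => H i j) =
      1 / (((1 + Hᴴ * A⁻¹ * H)⁻¹ : Matrix (Fin (L+1)) (Fin (L+1)) ℂ) j j) - 1 := by
  set G : Matrix (Fin M) (Fin L) ℂ := H.submatrix id j.succAbove with hG
  set h : Fin M → ℂ := fun i => H i j with hh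
  set B : Matrix (Fin M) (Fin M) ℂ := A + G * Gᴴ with hB
  set S : Matrix (Fin (L+1)) (Fin (L+1)) ℂ := 1 + Hᴴ * A⁻¹ * H with hS
  set T : Matrix (Fin L) (Fin L) ℂ := 1 + Gᴴ * A⁻¹ * G with hT
  -- positive definiteness of the various matrices
  have hBpd : B.PosDef := hA.add_posSemidef (posSemidef_self_mul_conjTranspose G)
  have hApd2 : (A + H * Hᴴ).PosDef := hA.add_posSemidef (posSemidef_self_mul_conjTranspose H)
  have hdetA : A.det ≠ 0 := hA.det_pos.ne'
  have hdetB : B.det ≠ 0 := hBpd.det_pos.ne'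
  have hdetAH : (A + H * Hᴴ).det ≠ 0 := hApd2.det_pos.ne'
  -- determinant identities
  have hDS : (A + H * Hᴴ).det = A.det * S.det := det_add_mul H Hᴴ hdetA.isUnit
  have hDT : B.det = A.det * T.det := det_add_mul G Gᴴ hdetA.isUnit
  have hdetS : S.det ≠ 0 := by
    intro h0; apply hdetAH; rw [hDS, h0, mul_zero]
  have hdetT : T.det ≠ 0 := by
    intro h0; apply hdetB; rw [hDT, h0, mul_zero]
  -- splitting H Hᴴ = G Gᴴ + h hᴴ
  have hsplit : H * Hᴴ = G * Gᴴ + replicateCol Unit h * replicateRow Unit (star h) := by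
    ext i k
    simp only [Matrix.add_apply, mul_apply, replicateCol_apply, replicateRow_apply, conjTranspose_apply, submatrix_apply,
      id_eq, Finset.sum_const, Finset.card_univ, Fintype.card_unit, one_smul, hG, hh,
      Pi.star_apply]
    rw [Fin.sum_univ_succAbove (fun l => H i l * star (H k l)) j]
    ring
  -- matrix determinant lemma for the rank one update
  have hML : (A + H * Hᴴ).det = B.det * (1 + star h ⬝ᵥ B⁻¹ *ᵥ h) := by
    have hd : (B + replicateCol Unit h * replicateRow Unit (star h)).det
        = B.det * (1 + replicateRow Unit (star h) * B⁻¹ * replicateCol Unit h).det :=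
      det_add_replicateCol_mul_replicateRow hdetB.isUnit h (star h)
    rw [hsplit, ← add_assoc, ← hB, hd,
      Matrix.det_unique (1 + replicateRow Unit (star h) * B⁻¹ * replicateCol Unit h)]
    congr 2
    simp [mul_apply, replicateRow, replicateCol, dotProduct, mulVec, Finset.mul_sum, mul_comm, mul_assoc,
      mul_left_comm]
    rw [Finset.sum_comm]
  -- the (j,j) minor of S is T
  have hmid : (Hᴴ * A⁻¹ * H).submatrix j.succAbove j.succAbove = Gᴴ * A⁻¹ * G := by
    rw [Matrix.submatrix_mul (Hᴴ * A⁻¹) H j.succAbove id j.succAbove Function.bijective_id,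
      Matrix.submatrix_mul Hᴴ A⁻¹ j.succAbove id id Function.bijective_id]
    congr 1
  have hminor : S.submatrix j.succAbove j.succAbove = T := by
    have h1 : S.submatrix j.succAbove j.succAbove
        = (1 : Matrix (Fin (L+1)) (Fin (L+1)) ℂ).submatrix j.succAbove j.succAbove
          + (Hᴴ * A⁻¹ * H).submatrix j.succAbove j.succAbove := by
      ext p q; simp [hS, Matrix.add_apply]
    rw [hT, h1, hmid, submatrix_one _ (Fin.succAbove_right_injective)]
  -- the (j,j) entry of S⁻¹
  have hSinv : S⁻¹ j j = T.det / S.det := by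
    rw [Matrix.inv_def, Matrix.smul_apply, adjugate_fin_succ_eq_det_submatrix, hminor, smul_eq_mul,
      Ring.inverse_eq_inv']
    rw [← two_mul, pow_mul]
    simp [div_eq_mul_inv, mul_comm]
  -- assemble
  have key : star h ⬝ᵥ B⁻¹ *ᵥ h = (A + H * Hᴴ).det / B.det - 1 := by
    rw [hML, mul_div_cancel_left₀ _ hdetB, add_sub_cancel_left]
  have hratio : (A + H * Hᴴ).det / B.det = S.det / T.det := by
    rw [hDS, hDT, mul_div_mul_left _ _ hdetA]
  rw [key, hSinv, hratio, one_div_div]
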